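/- arXiv:math-ph/0002033 — 2 statements merged into one kernel-verified Lean document; each statement's English description precedes it below -/
import Mathlib

section
/- Let Ω ⊂ ℝ² be open, let A : Ω → ℝ² be continuous, and let σ : Ω → ℂ be C¹ with |σ(x)| = 1 for all x ∈ Ω and ∂_j σ = 2iσA_j on Ω for j = 1,2. If u : Ω → ℂ is C¹ and satisfies σ·conj(u) = u on Ω (i.e. Ku = u for K := σ∘Γ, Γ the complex conjugation), then the supercurrent vanishes identically: Im(conj(u)·(∂_j u − iA_j u)) = 0 on Ω for j = 1,2. -/
open MeasureTheory Complex Set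

noncomputable section

abbrev Pt : Type := ℝ × ℝ

/-- First partial derivative `∂₁ f` of a function on `ℝ²`. -/
def pd1 {E : Type*} [NormedAddCommGroup E] [NormedSpace ℝ E] (f : Pt → E) (x : Pt) : E :=
  fderiv ℝ f x (1, 0)

/-- Second partial derivative `∂₂ f` of a function on `ℝ²`. -/
def pd2 {E : Type*} [NormedAddCommGroup E] [NormedSpace ℝ E] (f : Pt → E) (x : Pt) : E :=
  fderiv ℝ f x (0, 1)

/-- `rot A = ∂₁ A₂ - ∂₂ A₁`. -/
def rot2 (A : Pt → Pt) (x : Pt) : ℝ :=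
  pd1 (fun y => (A y).2) x - pd2 (fun y => (A y).1) x

/-- `div A = ∂₁ A₁ + ∂₂ A₂`. -/
def div2 (A : Pt → Pt) (x : Pt) : ℝ :=
  pd1 (fun y => (A y).1) x + pd2 (fun y => (A y).2) x

/-- Squared Euclidean norm of the magnetic gradient `∇u - iAu`. -/
def mgradSq (A : Pt → Pt) (u : Pt → ℂ) (x : Pt) : ℝ :=
  ‖pd1 u x - Complex.I * ((A x).1 : ℂ) * u x‖ ^ 2 +
    ‖pd2 u x - Complex.I * ((A x).2 : ℂ) * u x‖ ^ 2

/-- If `σ` is a `C¹` unimodular function on `Ω` with `∂_j σ = 2iσA_j`, and `u` is `C¹`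
with `σ·conj(u) = u` (i.e. `Ku = u`), then the supercurrent
`Im(conj(u)·(∂_j u - iA_j u))` vanishes identically on `Ω` for `j = 1, 2`. -/
theorem statement17 (Ω : Set Pt) (hΩo : IsOpen Ω)
    (A : Pt → Pt) (hA : ContinuousOn A Ω)
    (σ : Pt → ℂ) (hσ : ContDiffOn ℝ 1 σ Ω)
    (hσ1 : ∀ x ∈ Ω, ‖σ x‖ = 1)
    (hσd1 : ∀ x ∈ Ω, pd1 σ x = 2 * Complex.I * σ x * ((A x).1 : ℂ))
    (hσd2 : ∀ x ∈ Ω, pd2 σ x = 2 * Complex.I * σ x * ((A x).2 : ℂ))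
    (u : Pt → ℂ) (hu : ContDiffOn ℝ 1 u Ω)
    (hKu : ∀ x ∈ Ω, σ x * (starRingEnd ℂ) (u x) = u x) :
    ∀ x ∈ Ω,
      ((starRingEnd ℂ) (u x) * (pd1 u x - Complex.I * ((A x).1 : ℂ) * u x)).im = 0 ∧
      ((starRingEnd ℂ) (u x) * (pd2 u x - Complex.I * ((A x).2 : ℂ) * u x)).im = 0 := by
  intro x hx
  have hmem : Ω ∈ nhds x := hΩo.mem_nhds hx
  have hud : DifferentiableAt ℝ u x := (hu.contDiffAt hmem).differentiableAt one_ne_zero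
  have hσdf : DifferentiableAt ℝ σ x := (hσ.contDiffAt hmem).differentiableAt one_ne_zero
  have hU : HasFDerivAt u (fderiv ℝ u x) x := hud.hasFDerivAt
  have hS : HasFDerivAt σ (fderiv ℝ σ x) x := hσdf.hasFDerivAt
  have hC : HasFDerivAt (fun y => (starRingEnd ℂ) (u y))
      ((Complex.conjCLE : ℂ →L[ℝ] ℂ).comp (fderiv ℝ u x)) x := by
    have := (Complex.conjCLE : ℂ →L[ℝ] ℂ).hasFDerivAt.comp x hU
    exact this
  have hmul := hS.mul hC
  have heq : u =ᶠ[nhds x] (fun y => σ y * (starRingEnd ℂ) (u y)) := by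
    filter_upwards [hmem] with y hy using (hKu y hy).symm
  have hU2 : HasFDerivAt u
      (σ x • ((Complex.conjCLE : ℂ →L[ℝ] ℂ).comp (fderiv ℝ u x)) +
        (starRingEnd ℂ) (u x) • fderiv ℝ σ x) x :=
    hmul.congr_of_eventuallyEq heq
  have hDL := hU.unique hU2
  have key : ∀ v : Pt, fderiv ℝ u x v =
      σ x * (starRingEnd ℂ) (fderiv ℝ u x v) + (starRingEnd ℂ) (u x) * fderiv ℝ σ x v := by
    intro v
    conv_lhs => rw [hDL]
    simp [smul_eq_mul]
  have ha := hKu x hx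
  constructor
  · have hz := key (1, 0)
    have hσ1' := hσd1 x hx
    rw [show fderiv ℝ σ x (1,0) = pd1 σ x from rfl, hσ1'] at hz
    rw [show fderiv ℝ u x (1,0) = pd1 u x from rfl] at hz
    rw [← Complex.conj_eq_iff_im]
    have ht : (starRingEnd ℂ) (((A x).1 : ℂ)) = ((A x).1 : ℂ) := Complex.conj_ofReal _
    set a := u x; set s := σ x; set z := pd1 u x; set t := (((A x).1 : ℂ))
    simp only [map_mul, map_sub, Complex.conj_conj, Complex.conj_ofReal, Complex.conj_I]
    linear_combination (-(starRingEnd ℂ) a) * hz - ((starRingEnd ℂ) z + 2*Complex.I*t*(starRingEnd ℂ) a) * ha + a*Complex.I*((starRingEnd ℂ) a) * ht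
  · have hz := key (0, 1)
    have hσ2' := hσd2 x hx
    rw [show fderiv ℝ σ x (0,1) = pd2 σ x from rfl, hσ2'] at hz
    rw [show fderiv ℝ u x (0,1) = pd2 u x from rfl] at hz
    rw [← Complex.conj_eq_iff_im]
    have ht : (starRingEnd ℂ) (((A x).2 : ℂ)) = ((A x).2 : ℂ) := Complex.conj_ofReal _
    set a := u x; set s := σ x; set z := pd2 u x; set t := (((A x).2 : ℂ))
    simp only [map_mul, map_sub, Complex.conj_conj, Complex.conj_ofReal, Complex.conj_I]
    linear_combination (-(starRingEnd ℂ) a) * hz - ((starRingEnd ℂ) z + 2*Complex.I*t*(starRingEnd ℂ) a) * ha + a*Complex.I*((starRingEnd ℂ) a) * ht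
end
end

section
/- Let Ω ⊂ ℝ² be open, let A : Ω → ℝ² be C¹, and let σ : Ω → ℂ be C² with |σ(x)| = 1 for all x and ∂_j σ = 2iσA_j on Ω for j = 1,2. Define the magnetic Laplacian Δ_A u := Δu − 2iA·∇u − i(div A)u − |A|²u and the antilinear operator Ku := σ·conj(u). Then for every u ∈ C²(Ω;ℂ): Δ_A(Ku) = K(Δ_A u) on Ω. In particular, if λ ∈ ℝ and −Δ_A u = λu on Ω, then the function Ku also satisfies −Δ_A(Ku) = λ·(Ku) on Ω, so K maps eigenfunctions of −Δ_A to eigenfunctions with the same eigenvalue. -/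
open MeasureTheory Complex Set

noncomputable section

/-- The Laplacian `Δu = ∂₁²u + ∂₂²u`. -/
def lap2 (u : Pt → ℂ) (x : Pt) : ℂ := pd1 (pd1 u) x + pd2 (pd2 u) x

/-- The magnetic Laplacian `Δ_A u = Δu - 2iA·∇u - i(div A)u - |A|²u = (∇ - iA)²u`. -/
def magLap (A : Pt → Pt) (u : Pt → ℂ) (x : Pt) : ℂ :=
  lap2 u x - 2 * Complex.I * (((A x).1 : ℂ) * pd1 u x + ((A x).2 : ℂ) * pd2 u x) -
    Complex.I * ((div2 A x : ℝ) : ℂ) * u x - (((A x).1 ^ 2 + (A x).2 ^ 2 : ℝ) : ℂ) * u x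

lemma fd_mul {f g : Pt → ℂ} {x : Pt} (hf : DifferentiableAt ℝ f x)
    (hg : DifferentiableAt ℝ g x) (v : Pt) :
    fderiv ℝ (fun y => f y * g y) x v
      = fderiv ℝ f x v * g x + f x * fderiv ℝ g x v := by
  rw [fderiv_fun_mul hf hg]; simp [smul_eq_mul]; ring

lemma diff_conj {f : Pt → ℂ} {x : Pt} (hf : DifferentiableAt ℝ f x) :
    DifferentiableAt ℝ (fun y => starRingEnd ℂ (f y)) x :=
  (Complex.conjCLE.differentiableAt).comp x hf

lemma fd_conj (f : Pt → ℂ) (x : Pt) (v : Pt) :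
    fderiv ℝ (fun y => starRingEnd ℂ (f y)) x v = starRingEnd ℂ (fderiv ℝ f x v) := by
  have h := Complex.conjCLE.comp_fderiv (f := f) (x := x)
  have h2 : (fun y => starRingEnd ℂ (f y)) = (Complex.conjCLE ∘ f) := rfl
  rw [h2, h]; simp

lemma diff_ofReal {h : Pt → ℝ} {x : Pt} (hh : DifferentiableAt ℝ h x) :
    DifferentiableAt ℝ (fun y => ((h y : ℝ) : ℂ)) x :=
  Complex.ofRealCLM.differentiableAt.comp x hh

lemma fd_ofReal {h : Pt → ℝ} {x : Pt} (hh : DifferentiableAt ℝ h x) (v : Pt) :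
    fderiv ℝ (fun y => ((h y : ℝ) : ℂ)) x v = ((fderiv ℝ h x v : ℝ) : ℂ) := by
  have := (Complex.ofRealCLM.hasFDerivAt.comp x hh.hasFDerivAt).fderiv
  have h2 : (fun y => ((h y : ℝ) : ℂ)) = (Complex.ofRealCLM ∘ h) := rfl
  rw [h2, this]; simp

lemma fd_add {f g : Pt → ℂ} {x : Pt} (hf : DifferentiableAt ℝ f x)
    (hg : DifferentiableAt ℝ g x) (v : Pt) :
    fderiv ℝ (fun y => f y + g y) x v = fderiv ℝ f x v + fderiv ℝ g x v := by
  rw [fderiv_fun_add hf hg]; simp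

lemma fd_K {σ u : Pt → ℂ} {x : Pt} (hσ : DifferentiableAt ℝ σ x)
    (hu : DifferentiableAt ℝ u x) (v : Pt) :
    fderiv ℝ (fun y => σ y * starRingEnd ℂ (u y)) x v
      = fderiv ℝ σ x v * starRingEnd ℂ (u x) + σ x * starRingEnd ℂ (fderiv ℝ u x v) := by
  rw [fd_mul hσ (diff_conj hu) v, fd_conj]

lemma key (Ω : Set Pt) (hΩo : IsOpen Ω) (σ u : Pt → ℂ) (a : Pt → ℝ)
    (hσ : ContDiffOn ℝ 2 σ Ω) (hu : ContDiffOn ℝ 2 u Ω) (ha : ContDiffOn ℝ 1 a Ω)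
    (e : Pt)
    (hσe : ∀ y ∈ Ω, fderiv ℝ σ y e = 2 * Complex.I * σ y * ((a y : ℝ) : ℂ))
    (x : Pt) (hx : x ∈ Ω) :
    fderiv ℝ (fun y => fderiv ℝ (fun z => σ z * starRingEnd ℂ (u z)) y e) x e
      = σ x * (-(4:ℂ) * ((a x : ℝ):ℂ)^2 * starRingEnd ℂ (u x)
          + 2*Complex.I*((fderiv ℝ a x e : ℝ):ℂ) * starRingEnd ℂ (u x)
          + 4*Complex.I*((a x : ℝ):ℂ) * starRingEnd ℂ (fderiv ℝ u x e)
          + starRingEnd ℂ (fderiv ℝ (fun y => fderiv ℝ u y e) x e)) := by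
  have hmem := hΩo.mem_nhds hx
  have dσ : ∀ y ∈ Ω, DifferentiableAt ℝ σ y := fun y hy =>
    (hσ.differentiableOn (by norm_num)).differentiableAt (hΩo.mem_nhds hy)
  have du : ∀ y ∈ Ω, DifferentiableAt ℝ u y := fun y hy =>
    (hu.differentiableOn (by norm_num)).differentiableAt (hΩo.mem_nhds hy)
  have hev : (fun y => fderiv ℝ (fun z => σ z * starRingEnd ℂ (u z)) y e)
      =ᶠ[nhds x] (fun y => 2*Complex.I*σ y*((a y : ℝ):ℂ) * starRingEnd ℂ (u y)
          + σ y * starRingEnd ℂ (fderiv ℝ u y e)) := by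
    filter_upwards [hΩo.mem_nhds hx] with y hy
    rw [fd_K (dσ y hy) (du y hy) e, hσe y hy]
  rw [show fderiv ℝ (fun y => fderiv ℝ (fun z => σ z * starRingEnd ℂ (u z)) y e) x
      = fderiv ℝ (fun y => 2*Complex.I*σ y*((a y : ℝ):ℂ) * starRingEnd ℂ (u y)
          + σ y * starRingEnd ℂ (fderiv ℝ u y e)) x from hev.fderiv_eq]
  have dσx := dσ x hx
  have dux := du x hx
  have du1x : DifferentiableAt ℝ (fun y => fderiv ℝ u y e) x :=
    (((hu.fderiv_of_isOpen (m := 1) hΩo (by norm_num)).differentiableOn one_ne_zero).differentiableAt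
      hmem).clm_apply (differentiableAt_const e)
  have dax : DifferentiableAt ℝ a x :=
    (ha.differentiableOn one_ne_zero).differentiableAt hmem
  have dcu := diff_conj dux
  have dcu1 := diff_conj du1x
  have dca := diff_ofReal dax
  have d2 : DifferentiableAt ℝ (fun y => 2*Complex.I*σ y) x := dσx.const_mul _
  have dw1f : DifferentiableAt ℝ (fun y => 2*Complex.I*σ y*((a y : ℝ):ℂ)) x := d2.mul dca
  have dw1 : DifferentiableAt ℝ
      (fun y => 2*Complex.I*σ y*((a y : ℝ):ℂ) * starRingEnd ℂ (u y)) x := dw1f.mul dcu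
  have dw2 : DifferentiableAt ℝ (fun y => σ y * starRingEnd ℂ (fderiv ℝ u y e)) x :=
    dσx.mul dcu1
  rw [fd_add dw1 dw2 e, fd_mul dw1f dcu e, fd_mul d2 dca e, fd_mul dσx dcu1 e,
    fd_conj, fd_conj, fd_ofReal dax e]
  have hc : fderiv ℝ (fun y => 2*Complex.I*σ y) x e = 2*Complex.I * fderiv ℝ σ x e := by
    rw [fderiv_const_mul dσx]; simp
  rw [hc, hσe x hx]
  linear_combination (4 * σ x * ((a x:ℝ):ℂ)^2 * starRingEnd ℂ (u x)) * Complex.I_mul_I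

/-- If `σ` is a `C²` unimodular function on `Ω` with `∂_j σ = 2iσA_j`, then the antilinear
operator `Ku = σ·conj(u)` commutes with the magnetic Laplacian `Δ_A` on `C²` functions;
in particular `K` maps eigenfunctions of `-Δ_A` to eigenfunctions with the same
eigenvalue. -/
theorem statement18 (Ω : Set Pt) (hΩo : IsOpen Ω)
    (A : Pt → Pt) (hA : ContDiffOn ℝ 1 A Ω)
    (σ : Pt → ℂ) (hσ : ContDiffOn ℝ 2 σ Ω)
    (hσ1 : ∀ x ∈ Ω, ‖σ x‖ = 1)
    (hσd1 : ∀ x ∈ Ω, pd1 σ x = 2 * Complex.I * σ x * ((A x).1 : ℂ))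
    (hσd2 : ∀ x ∈ Ω, pd2 σ x = 2 * Complex.I * σ x * ((A x).2 : ℂ)) :
    (∀ u : Pt → ℂ, ContDiffOn ℝ 2 u Ω → ∀ x ∈ Ω,
        magLap A (fun y => σ y * (starRingEnd ℂ) (u y)) x =
          σ x * (starRingEnd ℂ) (magLap A u x)) ∧
      (∀ u : Pt → ℂ, ContDiffOn ℝ 2 u Ω → ∀ lam : ℝ,
        (∀ x ∈ Ω, -magLap A u x = (lam : ℂ) * u x) →
        ∀ x ∈ Ω, -magLap A (fun y => σ y * (starRingEnd ℂ) (u y)) x =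
          (lam : ℂ) * (σ x * (starRingEnd ℂ) (u x))) := by
  have ha1 : ContDiffOn ℝ 1 (fun y => (A y).1) Ω := (contDiff_fst.comp_contDiffOn hA)
  have ha2 : ContDiffOn ℝ 1 (fun y => (A y).2) Ω := (contDiff_snd.comp_contDiffOn hA)
  have main : ∀ u : Pt → ℂ, ContDiffOn ℝ 2 u Ω → ∀ x ∈ Ω,
      magLap A (fun y => σ y * (starRingEnd ℂ) (u y)) x =
        σ x * (starRingEnd ℂ) (magLap A u x) := by
    intro u hu x hx
    have k1 := key Ω hΩo σ u (fun y => (A y).1) hσ hu ha1 (1,0)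
      (fun y hy => hσd1 y hy) x hx
    have k2 := key Ω hΩo σ u (fun y => (A y).2) hσ hu ha2 (0,1)
      (fun y hy => hσd2 y hy) x hx
    have dσx : DifferentiableAt ℝ σ x :=
      (hσ.differentiableOn (by norm_num)).differentiableAt (hΩo.mem_nhds hx)
    have dux : DifferentiableAt ℝ u x :=
      (hu.differentiableOn (by norm_num)).differentiableAt (hΩo.mem_nhds hx)
    have f1 := fd_K dσx dux (1,0)
    have f2 := fd_K dσx dux (0,1)
    have e1 : ∀ f : Pt → ℂ, pd1 f = fun y => fderiv ℝ f y (1,0) := fun f => rfl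
    have e2 : ∀ f : Pt → ℂ, pd2 f = fun y => fderiv ℝ f y (0,1) := fun f => rfl
    simp only [magLap, lap2, div2, pd1, pd2, e1, e2] at *
    rw [k1, k2, f1, f2, hσd1 x hx, hσd2 x hx]
    push_cast
    simp only [map_add, map_sub, map_mul, Complex.conj_ofReal, Complex.conj_I, map_pow,
      map_ofNat]
    ring_nf
    linear_combination (-4 * σ x * (((A x).1:ℂ)^2 + ((A x).2:ℂ)^2) *
      starRingEnd ℂ (u x)) * Complex.I_mul_I
  refine ⟨main, ?_⟩
  intro u hu lam heig x hx
  have h1 := main u hu x hx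
  have h2 : magLap A u x = -((lam : ℂ) * u x) := by
    have h := heig x hx
    linear_combination -h
  rw [h1, h2]
  simp [map_mul, Complex.conj_ofReal]
  ring
end
end
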